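/- Let ξ be a locally finite subset of ℝ^d satisfying: for all x ∈ ℤ^d and all σ ∈ {-1,+1}^d, ξ ∩ (x + Q_σ) ≠ ∅. Then for every x ∈ ξ the Voronoi cell Vor(x|ξ) is a convex polytope, i.e. a bounded intersection of finitely many closed half-spaces. -/

import Mathlib

noncomputable section

abbrev E (d : ℕ) : Type := EuclideanSpace ℝ (Fin d)

def locFin {d : ℕ} (ξ : Set (E d)) : Prop := ∀ r : ℝ, (ξ ∩ Metric.closedBall 0 r).Finite

def vor {d : ℕ} (ξ : Set (E d)) (x : E d) : Set (E d) := {y | ∀ z ∈ ξ, dist y x ≤ dist y z}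

lemma halfspace_iff {d : ℕ} (x z y : E d) :
    (inner ℝ ((2:ℝ) • (z - x)) y : ℝ) ≤ ‖z‖^2 - ‖x‖^2 ↔ dist y x ≤ dist y z := by
  have h1 : dist y x ^ 2 = ‖y‖^2 - 2 * (inner ℝ y x : ℝ) + ‖x‖^2 := by
    rw [dist_eq_norm]; exact norm_sub_sq_real y x
  have h2 : dist y z ^ 2 = ‖y‖^2 - 2 * (inner ℝ y z : ℝ) + ‖z‖^2 := by
    rw [dist_eq_norm]; exact norm_sub_sq_real y z
  have h3 : (inner ℝ ((2:ℝ) • (z - x)) y : ℝ) = 2 * ((inner ℝ y z : ℝ) - (inner ℝ y x : ℝ)) := by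
    rw [real_inner_smul_left, inner_sub_left, real_inner_comm z y, real_inner_comm x y]
  constructor
  · intro h
    rw [h3] at h
    have hsq : dist y x ^ 2 ≤ dist y z ^ 2 := by rw [h1, h2]; linarith
    nlinarith [dist_nonneg (x := y) (y := x), dist_nonneg (x := y) (y := z)]
  · intro h
    have hsq : dist y x ^ 2 ≤ dist y z ^ 2 := by
      nlinarith [dist_nonneg (x := y) (y := x)]
    rw [h1, h2] at hsq
    rw [h3]; linarith

lemma exists_sep {d : ℕ} (ξ : Set (E d))
    (horth : ∀ (x : Fin d → ℤ) (σ : Fin d → ℝ), (∀ i, σ i = 1 ∨ σ i = -1) →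
      ∃ p ∈ ξ, ∀ i, σ i * (p i - (x i : ℝ)) > 0)
    (x u : E d) (hu : ‖u‖ = 1) :
    ∃ p ∈ ξ, 0 < (inner ℝ u (p - x) : ℝ) := by
  -- find a nonzero coordinate
  have hune : u ≠ 0 := by intro h; rw [h, norm_zero] at hu; norm_num at hu
  have hj : ∃ j, u j ≠ 0 := by
    by_contra h
    push_neg at h
    exact hune (by ext i; simpa using h i)
  obtain ⟨j, hj⟩ := hj
  have hjabs : 0 < |u j| := abs_pos.mpr hj
  set σ : Fin d → ℝ := fun i => if 0 ≤ u i then 1 else -1 with hσdef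
  have hσ : ∀ i, σ i = 1 ∨ σ i = -1 := by
    intro i; by_cases h : 0 ≤ u i
    · left; simp [hσdef, h]
    · right; simp [hσdef, h]
  obtain ⟨k, hk⟩ := exists_nat_gt ((inner ℝ u x : ℝ) / |u j|)
  set m : ℤ := if 0 ≤ u j then (k : ℤ) else -(k : ℤ) with hmdef
  set x0 : Fin d → ℤ := fun i => if i = j then m else 0 with hx0def
  obtain ⟨p, hpξ, hp⟩ := horth x0 σ hσ
  refine ⟨p, hpξ, ?_⟩
  have hinner : (inner ℝ u (p - x) : ℝ) = ∑ i, u i * (p i - x i) := by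
    rw [PiLp.inner_apply]
    congr 1
    funext i; simp [mul_comm]
  rw [hinner]
  have hsplit : ∀ i, u i * (p i - x i)
      = u i * (p i - (x0 i : ℝ)) + u i * ((x0 i : ℝ) - x i) := by
    intro i; ring
  rw [Finset.sum_congr rfl (fun i _ => hsplit i), Finset.sum_add_distrib]
  have hpos1 : 0 ≤ ∑ i, u i * (p i - (x0 i : ℝ)) := by
    apply Finset.sum_nonneg
    intro i _
    have := hp i
    by_cases h : 0 ≤ u i
    · have hσi : σ i = 1 := by simp [hσdef, h]
      rw [hσi, one_mul] at this
      positivity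
    · push_neg at h
      have hσi : σ i = -1 := by simp [hσdef, not_le.mpr h]
      rw [hσi] at this
      have : p i - (x0 i : ℝ) < 0 := by linarith
      nlinarith
  have hsum2 : ∑ i, u i * ((x0 i : ℝ) - x i) = |u j| * k - (inner ℝ u x : ℝ) := by
    have h1 : ∑ i, u i * (x0 i : ℝ) = u j * (m : ℝ) := by
      rw [show ∑ i, u i * (x0 i : ℝ) = ∑ i, (if i = j then u i * (m:ℝ) else 0) by
        congr 1; funext i; by_cases h : i = j <;> simp [hx0def, h]]
      simp [Finset.sum_ite_eq' Finset.univ j (fun i => u i * (m:ℝ))]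
    have h2 : (inner ℝ u x : ℝ) = ∑ i, u i * x i := by
      rw [PiLp.inner_apply]
      congr 1
      funext i; simp [mul_comm]
    have h3 : u j * (m : ℝ) = |u j| * k := by
      by_cases h : 0 ≤ u j
      · simp only [hmdef, if_pos h]
        rw [abs_of_nonneg h]; push_cast; ring
      · push_neg at h
        simp only [hmdef, if_neg (not_le.mpr h)]
        rw [abs_of_neg h]; push_cast; ring
    calc ∑ i, u i * ((x0 i : ℝ) - x i)
        = (∑ i, u i * (x0 i : ℝ)) - ∑ i, u i * x i := by
          rw [← Finset.sum_sub_distrib]; congr 1; funext i; ring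
      _ = |u j| * k - (inner ℝ u x : ℝ) := by rw [h1, h3, h2]
  rw [hsum2]
  have hlt : (inner ℝ u x : ℝ) < |u j| * k := by
    have := (div_lt_iff₀ hjabs).mp hk
    linarith [this, mul_comm (k:ℝ) |u j|]
  linarith

lemma bounded_of_sep {d : ℕ} (x : E d) (G : Finset (E d))
    (hG : ∀ u : E d, ‖u‖ = 1 → ∃ p ∈ G, 0 < (inner ℝ u (p - x) : ℝ)) :
    Bornology.IsBounded {y : E d | ∀ p ∈ G, dist y x ≤ dist y p} := by
  set s := {y : E d | ∀ p ∈ G, dist y x ≤ dist y p} with hsdef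
  by_contra hb
  rw [Metric.isBounded_iff_subset_closedBall x] at hb
  push_neg at hb
  have hseq : ∀ n : ℕ, ∃ y, y ∈ s ∧ (n : ℝ) < dist y x := by
    intro n
    obtain ⟨y, hy, hy2⟩ := Set.not_subset.mp (hb n)
    exact ⟨y, hy, by simpa [Metric.mem_closedBall] using hy2⟩
  choose y hys hyd using hseq
  have hdpos : ∀ n, 0 < dist (y n) x := fun n => lt_of_le_of_lt (Nat.cast_nonneg n) (hyd n)
  set u : ℕ → E d := fun n => (‖y n - x‖)⁻¹ • (y n - x) with hudef
  have hun : ∀ n, u n ∈ Metric.sphere (0 : E d) 1 := by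
    intro n
    rw [mem_sphere_zero_iff_norm, hudef]
    simp only [norm_smul, norm_inv, norm_norm]
    rw [inv_mul_cancel₀]
    rw [← dist_eq_norm]
    exact ne_of_gt (hdpos n)
  obtain ⟨u0, hu0, φ, hφ, hconv⟩ := (isCompact_sphere (0 : E d) 1).tendsto_subseq hun
  obtain ⟨p, hpG, hε⟩ := hG u0 (mem_sphere_zero_iff_norm.mp hu0)
  set ε := (inner ℝ u0 (p - x) : ℝ) with hεdef
  have hconv' : Filter.Tendsto (fun n => (inner ℝ (u (φ n)) (p - x) : ℝ)) Filter.atTop (nhds ε) := by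
    exact (hconv.inner tendsto_const_nhds)
  have hev : ∀ᶠ n in Filter.atTop, ε / 2 < (inner ℝ (u (φ n)) (p - x) : ℝ) :=
    hconv'.eventually (lt_mem_nhds (by linarith))
  obtain ⟨N, hN⟩ := Filter.eventually_atTop.mp hev
  -- key bound
  have hkey : ∀ n, (inner ℝ (u n) (p - x) : ℝ) ≤ ‖p - x‖^2 / (2 * dist (y n) x) := by
    intro n
    have hc : dist (y n) x ≤ dist (y n) p := hys n p hpG
    have hsq : dist (y n) x ^ 2 ≤ dist (y n) p ^ 2 := by
      nlinarith [dist_nonneg (x := y n) (y := x)]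
    have hexp : dist (y n) p ^ 2
        = dist (y n) x ^ 2 - 2 * (inner ℝ (y n - x) (p - x) : ℝ) + ‖p - x‖^2 := by
      rw [dist_eq_norm, dist_eq_norm]
      have : y n - p = (y n - x) - (p - x) := by abel
      rw [this, norm_sub_sq_real]
    have hip : 2 * (inner ℝ (y n - x) (p - x) : ℝ) ≤ ‖p - x‖^2 := by linarith [hexp ▸ hsq]
    have hiu : (inner ℝ (u n) (p - x) : ℝ) = (‖y n - x‖)⁻¹ * (inner ℝ (y n - x) (p - x) : ℝ) := by
      simp only [hudef]
      exact real_inner_smul_left _ _ _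
    rw [hiu, ← dist_eq_norm]
    rw [div_eq_mul_inv, mul_comm (2 : ℝ) (dist (y n) x), mul_inv]
    have h1 : (0:ℝ) < (dist (y n) x)⁻¹ := inv_pos.mpr (hdpos n)
    calc (dist (y n) x)⁻¹ * (inner ℝ (y n - x) (p - x) : ℝ)
        ≤ (dist (y n) x)⁻¹ * (‖p - x‖^2 / 2) := by
          apply mul_le_mul_of_nonneg_left _ (le_of_lt h1)
          linarith
      _ = ‖p - x‖^2 * ((dist (y n) x)⁻¹ * (2:ℝ)⁻¹) := by ring
  obtain ⟨M, hM⟩ := exists_nat_ge (‖p - x‖^2 / ε)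
  set n := max N M with hndef
  have hNn : N ≤ n := le_max_left _ _
  have h1 : ε / 2 < (inner ℝ (u (φ n)) (p - x) : ℝ) := hN n hNn
  have h2 : (inner ℝ (u (φ n)) (p - x) : ℝ) ≤ ‖p - x‖^2 / (2 * dist (y (φ n)) x) := hkey (φ n)
  have hD : (‖p - x‖^2 / ε) < dist (y (φ n)) x := by
    have : (n : ℝ) ≤ (φ n : ℝ) := by exact_mod_cast hφ.le_apply
    have h3 : (M : ℝ) ≤ (n : ℝ) := by exact_mod_cast le_max_right N M
    linarith [hyd (φ n)]
  have hDpos := hdpos (φ n)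
  have hcontr : ‖p - x‖^2 < ε * dist (y (φ n)) x := by
    rw [div_lt_iff₀ hε] at hD
    linarith [hD]
  rw [div_lt_iff₀ hε] at hD
  have h4 : ε / 2 < ‖p - x‖^2 / (2 * dist (y (φ n)) x) := lt_of_lt_of_le h1 h2
  rw [div_lt_div_iff₀ (by norm_num) (by positivity)] at h4
  nlinarith

/-- under the orthant condition, every Voronoi cell is a convex polytope,
i.e. a bounded intersection of finitely many closed half-spaces. -/
theorem stmt1 (d : ℕ) (ξ : Set (E d)) (hlf : locFin ξ)
    (horth : ∀ (x : Fin d → ℤ) (σ : Fin d → ℝ), (∀ i, σ i = 1 ∨ σ i = -1) →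
      ∃ p ∈ ξ, ∀ i, σ i * (p i - (x i : ℝ)) > 0) :
    ∀ x ∈ ξ, Bornology.IsBounded (vor ξ x) ∧
      ∃ (n : ℕ) (a : Fin n → E d) (b : Fin n → ℝ),
        vor ξ x = ⋂ i, {y : E d | (inner ℝ (a i) y : ℝ) ≤ b i} := by
  classical
  intro x hx
  -- finite subcover of the sphere by separating half-spaces
  have hcov : Metric.sphere (0:E d) 1 ⊆ ⋃ p : ξ, {u : E d | 0 < (inner ℝ u ((p:E d) - x) : ℝ)} := by
    intro u hu
    obtain ⟨p, hp, hpu⟩ := exists_sep ξ horth x u (mem_sphere_zero_iff_norm.mp hu)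
    exact Set.mem_iUnion.mpr ⟨⟨p, hp⟩, hpu⟩
  have hopen : ∀ p : ξ, IsOpen {u : E d | 0 < (inner ℝ u ((p:E d) - x) : ℝ)} := fun p =>
    isOpen_lt continuous_const (continuous_id.inner continuous_const)
  obtain ⟨t, ht⟩ := (isCompact_sphere (0:E d) 1).elim_finite_subcover _ hopen hcov
  set G : Finset (E d) := t.image Subtype.val with hGdef
  have hGξ : ∀ p ∈ G, p ∈ ξ := by
    intro p hp
    rw [hGdef, Finset.mem_image] at hp
    obtain ⟨a, _, rfl⟩ := hp
    exact a.2
  have hGsep : ∀ u : E d, ‖u‖ = 1 → ∃ p ∈ G, 0 < (inner ℝ u (p - x) : ℝ) := by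
    intro u hu
    have := ht (mem_sphere_zero_iff_norm.mpr hu)
    rw [Set.mem_iUnion₂] at this
    obtain ⟨p, hpt, hpu⟩ := this
    exact ⟨p, Finset.mem_image.mpr ⟨p, hpt, rfl⟩, hpu⟩
  have hPb := bounded_of_sep x G hGsep
  obtain ⟨R, hR⟩ := (Metric.isBounded_iff_subset_closedBall x).mp hPb
  have hxP : x ∈ {y : E d | ∀ p ∈ G, dist y x ≤ dist y p} := by
    intro p _; simp only [dist_self]; exact dist_nonneg
  have hR0 : 0 ≤ R := by
    have := hR hxP
    simpa [Metric.mem_closedBall] using this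
  have hsub : vor ξ x ⊆ {y : E d | ∀ p ∈ G, dist y x ≤ dist y p} := by
    intro y hy p hp
    exact hy p (hGξ p hp)
  constructor
  · exact hPb.subset hsub
  · set F : Finset (E d) := G ∪ (hlf (‖x‖ + 2*R + 1)).toFinset with hFdef
    have hFξ : ∀ z ∈ F, z ∈ ξ := by
      intro z hz
      rw [hFdef, Finset.mem_union] at hz
      rcases hz with h | h
      · exact hGξ z h
      · exact ((hlf (‖x‖ + 2*R + 1)).mem_toFinset.mp h).1
    set e : Fin F.card → E d := fun i => (F.equivFin.symm i : E d) with hedef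
    refine ⟨F.card, fun i => (2:ℝ) • (e i - x), fun i => ‖e i‖^2 - ‖x‖^2, ?_⟩
    ext y
    simp only [Set.mem_iInter, Set.mem_setOf_eq]
    constructor
    · intro hy i
      rw [halfspace_iff]
      exact hy (e i) (hFξ _ (F.equivFin.symm i).2)
    · intro hy
      have hyF : ∀ z ∈ F, dist y x ≤ dist y z := by
        intro z hz
        have h := hy (F.equivFin ⟨z, hz⟩)
        rw [halfspace_iff] at h
        have he : e (F.equivFin ⟨z, hz⟩) = z := by
          rw [hedef]; simp
        rwa [he] at h
      have hyP : y ∈ {y : E d | ∀ p ∈ G, dist y x ≤ dist y p} := by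
        intro p hp
        exact hyF p (Finset.mem_union_left _ hp)
      have hyR : dist y x ≤ R := by
        have := hR hyP
        simpa [Metric.mem_closedBall] using this
      intro z hz
      by_cases hzb : ‖z‖ ≤ ‖x‖ + 2*R + 1
      · refine hyF z (Finset.mem_union_right _ ((hlf _).mem_toFinset.mpr ⟨hz, ?_⟩))
        simpa [Metric.mem_closedBall] using hzb
      · push_neg at hzb
        have h1 : ‖y‖ ≤ ‖x‖ + R := by
          have h := norm_sub_norm_le y x
          rw [← dist_eq_norm] at h
          linarith
        have h2 : ‖z‖ - ‖y‖ ≤ dist y z := by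
          have h := norm_sub_norm_le z y
          rw [← dist_eq_norm, dist_comm] at h
          linarith
        linarith
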